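/- If x* solves min ‖x‖₀ subject to y = Ax and some x₀ with y = Ax₀ satisfies ‖x₀‖₀ < spark(A)/2, then x* = x₀. -/

import Mathlib

/-- Number of nonzero entries of a vector (the ℓ⁰ "norm"). -/
noncomputable def sparsity {n : ℕ} (x : Fin n → ℝ) : ℕ :=
  (Finset.univ.filter fun i => x i ≠ 0).card

/-- The spark of a matrix: the minimal number of nonzero entries of a
nonzero kernel vector. -/
noncomputable def spark {m n : ℕ} (A : Matrix (Fin m) (Fin n) ℝ) : ℕ :=
  sInf {k | ∃ v : Fin n → ℝ, v ≠ 0 ∧ A.mulVec v = 0 ∧ sparsity v = k}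

lemma sparsity_sub_le {n : ℕ} (x y : Fin n → ℝ) :
    sparsity (x - y) ≤ sparsity x + sparsity y := by
  unfold sparsity
  calc (Finset.univ.filter fun i => (x - y) i ≠ 0).card
      ≤ ((Finset.univ.filter fun i => x i ≠ 0) ∪
          (Finset.univ.filter fun i => y i ≠ 0)).card := by
        apply Finset.card_le_card
        intro i hi
        simp only [Finset.mem_filter, Finset.mem_union, Finset.mem_univ, true_and,
          Pi.sub_apply] at *
        by_contra h
        push_neg at h
        simp [h.1, h.2] at hi
    _ ≤ _ := Finset.card_union_le _ _

theorem stmt_5 {m n : ℕ} (A : Matrix (Fin m) (Fin n) ℝ) (y : Fin m → ℝ)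
    (xstar x0 : Fin n → ℝ)
    (hfeas : A.mulVec xstar = y)
    (hopt : ∀ z : Fin n → ℝ, A.mulVec z = y → sparsity xstar ≤ sparsity z)
    (hx0 : A.mulVec x0 = y)
    (hs : (sparsity x0 : ℝ) < (spark A : ℝ) / 2) :
    xstar = x0 := by
  by_contra hne
  have hv : xstar - x0 ≠ 0 := sub_ne_zero_of_ne hne
  have hker : A.mulVec (xstar - x0) = 0 := by
    rw [Matrix.mulVec_sub, hfeas, hx0, sub_self]
  have hmem : sparsity (xstar - x0) ∈
      {k | ∃ v : Fin n → ℝ, v ≠ 0 ∧ A.mulVec v = 0 ∧ sparsity v = k} :=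
    ⟨xstar - x0, hv, hker, rfl⟩
  have hspark : spark A ≤ sparsity (xstar - x0) := Nat.sInf_le hmem
  have h1 : sparsity xstar ≤ sparsity x0 := hopt x0 hx0
  have h2 : sparsity (xstar - x0) ≤ sparsity xstar + sparsity x0 :=
    sparsity_sub_le _ _
  have : (spark A : ℝ) ≤ 2 * sparsity x0 := by
    have := hspark.trans (h2.trans (add_le_add_left h1 _))
    calc (spark A : ℝ) ≤ ((sparsity x0 + sparsity x0 : ℕ) : ℝ) := by exact_mod_cast this
      _ = 2 * sparsity x0 := by push_cast; ring
  linarith
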